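/- Let H be a Berge-F-free r-uniform hypergraph for a graph F. Then there exists an F-free graph G on the vertex set of H, a red-blue coloring of the edges of G, and an injection M from the edge set of G to the hyperedge set of H with e ⊆ M(e) for each edge e, such that the number of hyperedges of H is at most the number of blue edges of G plus the number of r-cliques of G all of whose edges are red. -/

import Mathlib

open SimpleGraph Finset

/-- The hypergraph `E` contains a Berge copy of the graph `F`: an injection of the
vertices of `F` and an injection `φ` of the edges of `F` into hyperedges with
`f(e) ⊆ φ(e)`. -/
def ContainsBerge {W V : Type*} (F : SimpleGraph W) (E : Finset (Finset V)) : Prop :=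
  ∃ (f : W → V) (φ : F.edgeSet → Finset V), Function.Injective f ∧
    Function.Injective φ ∧
    ∀ e : F.edgeSet, φ e ∈ E ∧ ∀ x ∈ (e : Sym2 W), f x ∈ φ e

/-- The graph `G` contains a (subgraph) copy of `F`. -/
def ContainsCopy {W V : Type*} (F : SimpleGraph W) (G : SimpleGraph V) : Prop :=
  ∃ f : F →g G, Function.Injective f

set_option linter.unusedSectionVars false

namespace BergeAux

variable {V : Type*}

def pairIn (p : Sym2 V) (h : Finset V) : Prop := ¬ p.IsDiag ∧ ∀ v ∈ p, v ∈ h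

def Valid (H : Finset (Finset V)) (m : Finset (Finset V × Sym2 V)) : Prop :=
  (∀ x ∈ m, x.1 ∈ H ∧ pairIn x.2 x.1) ∧
  (∀ x ∈ m, ∀ y ∈ m, x.1 = y.1 → x = y) ∧
  (∀ x ∈ m, ∀ y ∈ m, x.2 = y.2 → x = y)

def IsAlt (H : Finset (Finset V)) (m : Finset (Finset V × Sym2 V)) :
    List (Sym2 V) → Finset V → Prop
  | [], h => h ∈ H ∧ ∀ p, (h, p) ∉ m
  | p :: ps, h => (h, p) ∈ m ∧ ∃ h', IsAlt H m ps h' ∧ pairIn p h'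

variable [DecidableEq V] {H : Finset (Finset V)} {m : Finset (Finset V × Sym2 V)}

lemma isAlt_mem (hv : Valid H m) {ps h} (ha : IsAlt H m ps h) : h ∈ H := by
  cases ps with
  | nil => exact ha.1
  | cons p ps => exact (hv.1 _ ha.1).1

lemma isAlt_decompose (qs₁ : List (Sym2 V)) :
    ∀ {p qs₂ h}, IsAlt H m (qs₁ ++ p :: qs₂) h → ∃ h₃, IsAlt H m (p :: qs₂) h₃ := by
  induction qs₁ with
  | nil => exact fun ha => ⟨_, ha⟩
  | cons a qs₁ ih =>
    intro p qs₂ h ha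
    obtain ⟨-, h', ha', -⟩ := ha
    exact ih ha'

lemma exists_nodup_alt (hv : Valid H m) :
    ∀ (n : ℕ) (ps : List (Sym2 V)) (h), ps.length ≤ n → IsAlt H m ps h →
      ∃ qs, qs.Nodup ∧ qs.length ≤ ps.length ∧ IsAlt H m qs h := by
  intro n
  induction n with
  | zero =>
    intro ps h hlen ha
    cases ps with
    | nil => exact ⟨[], List.nodup_nil, le_rfl, ha⟩
    | cons p ps => simp at hlen
  | succ n ih =>
    intro ps h hlen ha
    cases ps with
    | nil => exact ⟨[], List.nodup_nil, le_rfl, ha⟩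
    | cons p ps =>
      obtain ⟨hm, h', ha', hpin⟩ := ha
      obtain ⟨qs, hnd, hql, hqa⟩ := ih ps h' (Nat.le_of_succ_le_succ hlen) ha'
      by_cases hp : p ∈ qs
      · obtain ⟨s, t, rfl⟩ := List.append_of_mem hp
        obtain ⟨h₃, ha₃⟩ := isAlt_decompose s hqa
        have h₃h : h₃ = h := by
          have := hv.2.2 _ ha₃.1 _ hm rfl
          exact congrArg Prod.fst this
        rw [h₃h] at ha₃
        have hlen1 : (p :: t).length ≤ (s ++ p :: t).length := by
          simp only [List.length_cons, List.length_append]; omega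
        have hlen2 : (s ++ p :: t).length ≤ ps.length := hql
        have hlen3 : ps.length ≤ n := Nat.le_of_succ_le_succ hlen
        obtain ⟨qs', ha', hb', hc'⟩ := ih (p :: t) h (le_trans (le_trans hlen1 hlen2) hlen3) ha₃
        exact ⟨qs', ha', by simp only [List.length_cons] at *; omega, hc'⟩
      · exact ⟨p :: qs, List.nodup_cons.mpr ⟨hp, hnd⟩, by simpa using hql,
          hm, h', hqa, hpin⟩

lemma reroute (hv : Valid H m) :
    ∀ (ps : List (Sym2 V)) (h), ps.Nodup → IsAlt H m ps h →
      ∃ m', Valid H m' ∧ m'.image Prod.snd = m.image Prod.snd ∧ m'.card = m.card ∧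
        (∀ p, (h, p) ∉ m') ∧
        (∀ x : Finset V × Sym2 V, x.2 ∉ ps → (x ∈ m' ↔ x ∈ m)) := by
  classical
  intro ps
  induction ps with
  | nil =>
    intro h _ ha
    exact ⟨m, hv, rfl, rfl, ha.2, fun _ _ => Iff.rfl⟩
  | cons p ps ih =>
    intro h hnd ha
    obtain ⟨hm, h', ha', hpin⟩ := ha
    have hpnotps : p ∉ ps := (List.nodup_cons.mp hnd).1
    obtain ⟨m₁, hv₁, him₁, hcard₁, hfree₁, hagree₁⟩ := ih h' (List.nodup_cons.mp hnd).2 ha'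
    have hhm₁ : (h, p) ∈ m₁ := (hagree₁ (h, p) hpnotps).mpr hm
    have hhne : h ≠ h' := by
      rintro rfl
      exact hfree₁ p hhm₁
    set m₂ : Finset (Finset V × Sym2 V) := insert (h', p) (m₁.erase (h, p)) with hm₂
    have hmem₂ : ∀ x, x ∈ m₂ ↔ x = (h', p) ∨ (x ∈ m₁ ∧ x ≠ (h, p)) := by
      intro x
      simp [hm₂, Finset.mem_insert, Finset.mem_erase, and_comm]
    have hh'H : h' ∈ H := isAlt_mem hv ha'
    have hv₂ : Valid H m₂ := by
      refine ⟨?_, ?_, ?_⟩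
      · intro x hx
        rcases (hmem₂ x).mp hx with rfl | ⟨hx₁, -⟩
        · exact ⟨hh'H, hpin⟩
        · exact hv₁.1 x hx₁
      · intro x hx y hy hxy
        rcases (hmem₂ x).mp hx with rfl | ⟨hx₁, hxne⟩ <;>
          rcases (hmem₂ y).mp hy with rfl | ⟨hy₁, hyne⟩
        · rfl
        · exfalso
          have hy' : y = (h', y.2) := Prod.ext hxy.symm rfl
          exact hfree₁ y.2 (hy' ▸ hy₁)
        · exfalso
          have hx' : x = (h', x.2) := Prod.ext hxy rfl
          exact hfree₁ x.2 (hx' ▸ hx₁)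
        · exact hv₁.2.1 x hx₁ y hy₁ hxy
      · intro x hx y hy hxy
        rcases (hmem₂ x).mp hx with rfl | ⟨hx₁, hxne⟩ <;>
          rcases (hmem₂ y).mp hy with rfl | ⟨hy₁, hyne⟩
        · rfl
        · exact absurd (hv₁.2.2 y hy₁ _ hhm₁ hxy.symm) hyne
        · exact absurd (hv₁.2.2 x hx₁ _ hhm₁ hxy) hxne
        · exact hv₁.2.2 x hx₁ y hy₁ hxy
    have hhm₁' : (h', p) ∉ m₁.erase (h, p) := fun hc => hfree₁ p (Finset.mem_of_mem_erase hc)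
    have hcard₂ : m₂.card = m.card := by
      rw [hm₂, Finset.card_insert_of_notMem hhm₁', Finset.card_erase_of_mem hhm₁, ← hcard₁]
      have : 0 < m₁.card := Finset.card_pos.mpr ⟨_, hhm₁⟩
      omega
    have him₂ : m₂.image Prod.snd = m.image Prod.snd := by
      rw [← him₁]
      apply Finset.Subset.antisymm
      · intro q hq
        obtain ⟨x, hx, rfl⟩ := Finset.mem_image.mp hq
        rcases (hmem₂ x).mp hx with rfl | ⟨hx₁, -⟩
        · exact Finset.mem_image.mpr ⟨(h, p), hhm₁, rfl⟩
        · exact Finset.mem_image.mpr ⟨x, hx₁, rfl⟩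
      · intro q hq
        obtain ⟨x, hx, rfl⟩ := Finset.mem_image.mp hq
        by_cases hxp : x = (h, p)
        · subst hxp
          exact Finset.mem_image.mpr ⟨(h', p), (hmem₂ _).mpr (Or.inl rfl), rfl⟩
        · exact Finset.mem_image.mpr ⟨x, (hmem₂ _).mpr (Or.inr ⟨hx, hxp⟩), rfl⟩
    refine ⟨m₂, hv₂, him₂, hcard₂, ?_, ?_⟩
    · intro q hq
      rcases (hmem₂ _).mp hq with heq | ⟨hq₁, hqne⟩
      · exact hhne (congrArg Prod.fst heq)
      · exact hqne (hv₁.2.1 _ hq₁ _ hhm₁ rfl)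
    · intro x hx
      have hxp : x.2 ≠ p := fun hc => hx (hc ▸ List.mem_cons_self (a := p) (l := ps))
      have hxps : x.2 ∉ ps := fun hc => hx (List.mem_cons_of_mem p hc)
      rw [← hagree₁ x hxps]
      constructor
      · intro hx₂
        rcases (hmem₂ x).mp hx₂ with rfl | ⟨hx₁, -⟩
        · exact absurd rfl hxp
        · exact hx₁
      · intro hx₁
        exact (hmem₂ x).mpr (Or.inr ⟨hx₁, fun hc => hxp (congrArg Prod.snd hc)⟩)


lemma no_augment (hv : Valid H m) (hmax : ∀ m', Valid H m' → m'.card ≤ m.card)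
    {ps h} (ha : IsAlt H m ps h) {q} (hq : pairIn q h)
    (hqP : q ∉ m.image Prod.snd) : False := by
  classical
  obtain ⟨qs, hnd, -, hqa⟩ := exists_nodup_alt hv ps.length ps h le_rfl ha
  obtain ⟨m₁, hv₁, him₁, hcard₁, hfree₁, -⟩ := reroute hv qs h hnd hqa
  have hhH : h ∈ H := isAlt_mem hv ha
  have hnotin : (h, q) ∉ m₁ := hfree₁ q
  have hv₂ : Valid H (insert (h, q) m₁) := by
    refine ⟨?_, ?_, ?_⟩
    · intro x hx
      rcases Finset.mem_insert.mp hx with rfl | hx₁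
      · exact ⟨hhH, hq⟩
      · exact hv₁.1 x hx₁
    · intro x hx y hy hxy
      rcases Finset.mem_insert.mp hx with rfl | hx₁ <;>
        rcases Finset.mem_insert.mp hy with rfl | hy₁
      · rfl
      · exfalso
        have : y = (h, y.2) := Prod.ext hxy.symm rfl
        exact hfree₁ y.2 (this ▸ hy₁)
      · exfalso
        have : x = (h, x.2) := Prod.ext hxy rfl
        exact hfree₁ x.2 (this ▸ hx₁)
      · exact hv₁.2.1 x hx₁ y hy₁ hxy
    · intro x hx y hy hxy
      rcases Finset.mem_insert.mp hx with rfl | hx₁ <;>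
        rcases Finset.mem_insert.mp hy with rfl | hy₁
      · rfl
      · exact absurd (him₁ ▸ Finset.mem_image.mpr ⟨y, hy₁, hxy.symm⟩) hqP
      · exact absurd (him₁ ▸ Finset.mem_image.mpr ⟨x, hx₁, hxy⟩) hqP
      · exact hv₁.2.2 x hx₁ y hy₁ hxy
  have hc : (insert (h, q) m₁).card = m.card + 1 := by
    rw [Finset.card_insert_of_notMem hnotin, hcard₁]
  have := hmax _ hv₂
  omega

end BergeAux

open BergeAux

/-- If `H` is a Berge-`F`-free `r`-uniform hypergraph, then there is an `F`-free
graph `G` on its vertex set, a red–blue coloring `c` of its edges (`true` = red),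
and an injection `M` of the edges of `G` into hyperedges of `H` with `e ⊆ M(e)`,
such that `e(H)` is at most the number of blue edges plus the number of red
`r`-cliques of `G`. -/
theorem berge_free_reduction {W V : Type*} [Fintype V] (F : SimpleGraph W) (r : ℕ)
    (H : Finset (Finset V)) (huniform : ∀ e ∈ H, e.card = r)
    (hfree : ¬ ContainsBerge F H) :
    ∃ (G : SimpleGraph V) (c : Sym2 V → Bool) (M : G.edgeSet → Finset V),
      ¬ ContainsCopy F G ∧
      Function.Injective M ∧
      (∀ e : G.edgeSet, M e ∈ H ∧ ∀ x ∈ (e : Sym2 V), x ∈ M e) ∧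
      H.card ≤ {e : Sym2 V | e ∈ G.edgeSet ∧ c e = false}.ncard +
        {s : Finset V | G.IsNClique r s ∧
          ∀ x ∈ s, ∀ y ∈ s, x ≠ y → c s(x, y) = true}.ncard := by
  classical
  -- a maximum "matching" assigning distinct pairs to hyperedges
  obtain ⟨m, hmval, hmax⟩ :
      ∃ m, Valid H m ∧ ∀ m', Valid H m' → m'.card ≤ m.card := by
    obtain ⟨m, hm, hmax⟩ := Finset.exists_max_image
      ((H ×ˢ (Finset.univ : Finset (Sym2 V))).powerset.filter (Valid H))
      Finset.card ⟨∅, by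
        refine Finset.mem_filter.mpr ⟨Finset.mem_powerset.mpr (Finset.empty_subset _), ?_⟩
        refine ⟨?_, ?_, ?_⟩ <;> intro x hx <;> simp at hx⟩
    refine ⟨m, (Finset.mem_filter.mp hm).2, fun m' hv' => hmax m' ?_⟩
    refine Finset.mem_filter.mpr ⟨Finset.mem_powerset.mpr fun x hx => ?_, hv'⟩
    exact Finset.mem_product.mpr ⟨(hv'.1 x hx).1, Finset.mem_univ _⟩
  set P := m.image Prod.snd with hP
  set G := SimpleGraph.fromEdgeSet (↑P : Set (Sym2 V)) with hG
  have hPdiag : ∀ p ∈ P, ¬ p.IsDiag := by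
    intro p hp
    obtain ⟨x, hx, rfl⟩ := Finset.mem_image.mp hp
    exact (hmval.1 x hx).2.1
  have hedge : G.edgeSet = ↑P := by
    rw [hG, edgeSet_fromEdgeSet]
    ext e
    simp only [Set.mem_diff, Set.mem_setOf_eq, Finset.mem_coe, and_iff_left_iff_imp]
    exact fun he => hPdiag e he
  have hex : ∀ e : G.edgeSet, ∃ x, x ∈ m ∧ x.2 = (e : Sym2 V) := by
    intro e
    have he : (e : Sym2 V) ∈ P :=
      Finset.mem_coe.mp ((Set.ext_iff.mp hedge _).mp e.2)
    obtain ⟨x, hx, hxe⟩ := Finset.mem_image.mp he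
    exact ⟨x, hx, hxe⟩
  set M : G.edgeSet → Finset V := fun e => (Classical.choose (hex e)).1 with hM
  have hMspec : ∀ e : G.edgeSet, (M e, (e : Sym2 V)) ∈ m := by
    intro e
    obtain ⟨hx, hxe⟩ := Classical.choose_spec (hex e)
    have heq : Classical.choose (hex e) = (M e, (e : Sym2 V)) := Prod.ext rfl hxe
    rwa [heq] at hx
  have hMinj : Function.Injective M := by
    intro e₁ e₂ h12
    have := hmval.2.1 _ (hMspec e₁) _ (hMspec e₂) h12
    exact Subtype.ext (congrArg Prod.snd this)
  -- reachable hyperedges and red pairs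
  set Reach : Finset V → Prop := fun h => ∃ ps, IsAlt H m ps h with hReach
  set Red : Sym2 V → Prop := fun p => ∃ h, Reach h ∧ pairIn p h with hRedDef
  set c : Sym2 V → Bool := fun p => if Red p then true else false with hc
  have hctrue : ∀ p, c p = true ↔ Red p := by
    intro p; by_cases h : Red p <;> simp [hc, h]
  have hcfalse : ∀ p, c p = false ↔ ¬ Red p := by
    intro p; by_cases h : Red p <;> simp [hc, h]
  have hpairP : ∀ h, Reach h → ∀ q, pairIn q h → q ∈ P := by
    rintro h ⟨ps, hps⟩ q hq
    by_contra hqP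
    exact no_augment hmval hmax hps hq hqP
  have hpairin : ∀ (h : Finset V) (x y : V), x ∈ h → y ∈ h → x ≠ y → pairIn s(x, y) h := by
    intro h x y hx hy hxy
    refine ⟨by simp [Sym2.mk_isDiag_iff, hxy], ?_⟩
    intro v hv
    rcases Sym2.mem_iff.mp hv with rfl | rfl <;> assumption
  have hclique : ∀ h ∈ H, Reach h →
      G.IsNClique r h ∧ ∀ x ∈ h, ∀ y ∈ h, x ≠ y → c s(x, y) = true := by
    intro h hH hreach
    refine ⟨?_, ?_⟩
    · rw [isNClique_iff]
      refine ⟨?_, huniform h hH⟩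
      intro x hx y hy hxy
      have hq := hpairin h x y (Finset.mem_coe.mp hx) (Finset.mem_coe.mp hy) hxy
      have hqP := hpairP h hreach _ hq
      rw [hG, fromEdgeSet_adj]
      exact ⟨hqP, hxy⟩
    · intro x hx y hy hxy
      exact (hctrue _).mpr ⟨h, hreach, hpairin h x y hx hy hxy⟩
  have hreach_base : ∀ h ∈ H, (∀ p, (h, p) ∉ m) → Reach h := fun h hH hun => ⟨[], hH, hun⟩
  have hreach_step : ∀ h p, (h, p) ∈ m → Red p → Reach h := by
    rintro h p hpm ⟨h', ⟨ps, hps⟩, hpin⟩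
    exact ⟨p :: ps, hpm, h', hps, hpin⟩
  -- F-freeness
  have hFfree : ¬ ContainsCopy F G := by
    rintro ⟨f, hfinj⟩
    apply hfree
    refine ⟨f, fun e => M (f.mapEdgeSet e), hfinj,
      hMinj.comp (SimpleGraph.Hom.mapEdgeSet.injective f hfinj), ?_⟩
    intro e
    refine ⟨(hmval.1 _ (hMspec _)).1, ?_⟩
    intro x hx
    have h2 : f x ∈ (f.mapEdgeSet e : Sym2 V) := by
      exact Sym2.mem_map.mpr ⟨x, hx, rfl⟩
    exact (hmval.1 _ (hMspec (f.mapEdgeSet e))).2.2 _ h2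
  -- counting
  have hsplit := Finset.card_filter_add_card_filter_not
      (s := H) (p := fun h => ∃ p, (h, p) ∈ m ∧ ¬ Red p)
  set Hb := H.filter (fun h => ∃ p, (h, p) ∈ m ∧ ¬ Red p) with hHb
  set Hr := H.filter (fun h => ¬ ∃ p, (h, p) ∈ m ∧ ¬ Red p) with hHr
  set Bset : Set (Sym2 V) := {e : Sym2 V | e ∈ G.edgeSet ∧ c e = false} with hB
  set RC : Set (Finset V) := {s : Finset V | G.IsNClique r s ∧
      ∀ x ∈ s, ∀ y ∈ s, x ≠ y → c s(x, y) = true} with hRC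
  have hfb : ∀ h ∈ Hb, ∃ p, (h, p) ∈ m ∧ ¬ Red p := fun h hh => (Finset.mem_filter.mp hh).2
  choose pb hpb1 hpb2 using hfb
  have hbcard : Hb.card ≤ Bset.ncard := by
    rw [Set.ncard_eq_toFinset_card Bset (Set.toFinite _), ← Finset.card_attach (s := Hb)]
    apply Finset.card_le_card_of_injOn (fun h => pb h.1 h.2)
    · intro h _
      rw [Finset.mem_coe, Set.Finite.mem_toFinset]
      refine ⟨?_, (hcfalse _).mpr (hpb2 h.1 h.2)⟩
      rw [hedge]
      exact Finset.mem_coe.mpr (Finset.mem_image.mpr ⟨(h.1, pb h.1 h.2), hpb1 h.1 h.2, rfl⟩)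
    · intro h1 _ h2 _ heq
      have := hmval.2.2 _ (hpb1 h1.1 h1.2) _ (hpb1 h2.1 h2.2) heq
      exact Subtype.ext (congrArg Prod.fst this)
  have hrsub : ↑Hr ⊆ RC := by
    intro h hh
    have hh' := Finset.mem_filter.mp (Finset.mem_coe.mp hh)
    have hreach : Reach h := by
      by_cases hmm : ∃ p, (h, p) ∈ m
      · obtain ⟨p, hp⟩ := hmm
        have hred : Red p := by
          by_contra hnr
          exact hh'.2 ⟨p, hp, hnr⟩
        exact hreach_step h p hp hred
      · exact hreach_base h hh'.1 (fun p hp => hmm ⟨p, hp⟩)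
    exact hclique h hh'.1 hreach
  have hrcard : Hr.card ≤ RC.ncard := by
    rw [← Set.ncard_coe_finset]
    exact Set.ncard_le_ncard hrsub (Set.toFinite _)
  refine ⟨G, c, M, hFfree, hMinj, ?_, ?_⟩
  · intro e
    exact ⟨(hmval.1 _ (hMspec e)).1, fun x hx => (hmval.1 _ (hMspec e)).2.2 x hx⟩
  · calc H.card = Hb.card + Hr.card := hsplit.symm
      _ ≤ Bset.ncard + RC.ncard := Nat.add_le_add hbcard hrcard
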